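/- Let (Ω, μ) be a probability space, H ∈ (0,1), n ∈ ℕ, and let B₁, …, Bₙ : ℝ → L²(Ω; ℝ) be centered processes that are pairwise uncorrelated across indices (E[B_i(s) B_j(t)] = 0 whenever i ≠ j) and each have the fractional Brownian covariance E[B_i(s) B_i(t)] = K_H(s,t). Given angles θ₁, …, θₙ ∈ ℝ and nonnegative weights λ₁, …, λₙ and c₁, …, cₙ, define the turning-band field Y(x) := Σ_{i=1}^{n} √(γ(H) λ_i c_i) · B_i(x·u(θ_i)) for x ∈ ℝ². Then for all x, y ∈ ℝ², E[(Y(x) − Y(y))²] = γ(H) Σ_{i=1}^{n} λ_i c_i |(x−y)·u(θ_i)|^{2H}; in particular the turning-band field has stationary second-order increments with variogram given by the discrete angular sum Σ_i λ_i c_i |z·u(θ_i)|^{2H}, the Riemann-sum approximation of the elementary field's variogram. -/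

import Mathlib

open MeasureTheory Real Set Finset RealInnerProductSpace

noncomputable section

/-- The covariance kernel of fractional Brownian motion of Hurst index `H`. -/
def fbmCov (H s t : ℝ) : ℝ := (|s| ^ (2 * H) + |t| ^ (2 * H) - |s - t| ^ (2 * H)) / 2

/-- The normalizing constant `γ(H)`. -/
def gammaH (H : ℝ) : ℝ := π / (2 * H * Real.Gamma (2 * H) * Real.sin (H * π))

/-- The unit vector of angle `θ`. -/
def u (θ : ℝ) : EuclideanSpace ℝ (Fin 2) :=
  WithLp.toLp 2 ![Real.cos θ, Real.sin θ]

lemma memLp_two_integrable_mul {Ω : Type*} [MeasurableSpace Ω] {μ : Measure Ω}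
    {f g : Ω → ℝ} (hf : MemLp f 2 μ) (hg : MemLp g 2 μ) :
    Integrable (fun ω => f ω * g ω) μ := by
  have h : Integrable (fun ω => (((f ω + g ω) ^ 2 - f ω ^ 2) - g ω ^ 2) / 2) μ :=
    (((hf.add hg).integrable_sq.sub hf.integrable_sq).sub hg.integrable_sq).div_const 2
  convert h using 2 with ω
  ring

/-- Variogram of the turning-band field: if `B₁,…,Bₙ` are centered,
square-integrable, pairwise uncorrelated processes with fractional Brownian
covariance `K_H`, then the turning-band field
`Y(x) = Σᵢ √(γ(H)λᵢcᵢ) Bᵢ(x·u(θᵢ))` has stationary second-order increments with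
`E[(Y(x) − Y(y))²] = γ(H) Σᵢ λᵢ cᵢ |(x−y)·u(θᵢ)|^{2H}`. -/
theorem turning_band_field_variogram {Ω : Type*} [MeasurableSpace Ω]
    (μ : Measure Ω) [IsProbabilityMeasure μ]
    (H : ℝ) (hH : H ∈ Set.Ioo (0 : ℝ) 1) (n : ℕ)
    (B : Fin n → ℝ → Ω → ℝ)
    (hL2 : ∀ i s, MemLp (B i s) 2 μ)
    (hcentered : ∀ i s, ∫ ω, B i s ω ∂μ = 0)
    (huncorr : ∀ i j, i ≠ j → ∀ s t, ∫ ω, B i s ω * B j t ω ∂μ = 0)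
    (hcov : ∀ i s t, ∫ ω, B i s ω * B i t ω ∂μ = fbmCov H s t)
    (θ : Fin n → ℝ) (lam c : Fin n → ℝ)
    (hlam : ∀ i, 0 ≤ lam i) (hc : ∀ i, 0 ≤ c i)
    (Y : EuclideanSpace ℝ (Fin 2) → Ω → ℝ)
    (hY : ∀ x ω, Y x ω =
      ∑ i, Real.sqrt (gammaH H * lam i * c i) * B i ⟪x, u (θ i)⟫ ω) :
    ∀ x y : EuclideanSpace ℝ (Fin 2),
      ∫ ω, (Y x ω - Y y ω) ^ 2 ∂μ =
        gammaH H * ∑ i, lam i * c i * |⟪x - y, u (θ i)⟫| ^ (2 * H) := by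
  intro x y
  obtain ⟨hH0, hH1⟩ := hH
  -- gammaH nonneg
  have hγ : 0 ≤ gammaH H := by
    apply div_nonneg Real.pi_pos.le
    apply mul_nonneg (mul_nonneg (by linarith) (Real.Gamma_pos_of_pos (by linarith)).le)
    exact (Real.sin_pos_of_pos_of_lt_pi (mul_pos hH0 Real.pi_pos)
      (by nlinarith [Real.pi_pos])).le
  set a : Fin n → ℝ := fun i => Real.sqrt (gammaH H * lam i * c i) with ha
  have ha2 : ∀ i, a i * a i = gammaH H * lam i * c i := fun i =>
    Real.mul_self_sqrt (mul_nonneg (mul_nonneg hγ (hlam i)) (hc i))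
  set s : Fin n → ℝ := fun i => ⟪x, u (θ i)⟫ with hs
  set t : Fin n → ℝ := fun i => ⟪y, u (θ i)⟫ with ht
  set g : Fin n → Ω → ℝ := fun i ω => B i (s i) ω - B i (t i) ω with hg
  have hgL2 : ∀ i, MemLp (g i) 2 μ := fun i => (hL2 i (s i)).sub (hL2 i (t i))
  have key : ∀ ω, Y x ω - Y y ω = ∑ i, a i * g i ω := by
    intro ω
    simp only [hY, hg, ← Finset.sum_sub_distrib, mul_sub]
    rfl
  -- covariance of increments
  have hgg : ∀ i j, ∫ ω, g i ω * g j ω ∂μ =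
      if i = j then |s i - t i| ^ (2 * H) else 0 := by
    intro i j
    have e : ∀ ω, g i ω * g j ω =
        B i (s i) ω * B j (s j) ω - B i (s i) ω * B j (t j) ω
        - B i (t i) ω * B j (s j) ω + B i (t i) ω * B j (t j) ω := by
      intro ω; simp only [hg]; ring
    have I : ∀ (p q : ℝ), Integrable (fun ω => B i p ω * B j q ω) μ := fun p q =>
      memLp_two_integrable_mul (hL2 i p) (hL2 j q)
    have I1 : Integrable (fun ω => B i (s i) ω * B j (s j) ω
        - B i (s i) ω * B j (t j) ω) μ := (I _ _).sub (I _ _)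
    have I2 : Integrable (fun ω => B i (s i) ω * B j (s j) ω
        - B i (s i) ω * B j (t j) ω - B i (t i) ω * B j (s j) ω) μ := I1.sub (I _ _)
    calc ∫ ω, g i ω * g j ω ∂μ
        = ∫ ω, (B i (s i) ω * B j (s j) ω - B i (s i) ω * B j (t j) ω
          - B i (t i) ω * B j (s j) ω + B i (t i) ω * B j (t j) ω) ∂μ := by
          simp only [e]
      _ = (∫ ω, B i (s i) ω * B j (s j) ω ∂μ) - (∫ ω, B i (s i) ω * B j (t j) ω ∂μ)
          - (∫ ω, B i (t i) ω * B j (s j) ω ∂μ) + (∫ ω, B i (t i) ω * B j (t j) ω ∂μ) := by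
          rw [integral_add I2 (I _ _), integral_sub I1 (I _ _),
            integral_sub (I _ _) (I _ _)]
      _ = if i = j then |s i - t i| ^ (2 * H) else 0 := by
          rcases eq_or_ne i j with rfl | hij
          · rw [if_pos rfl]
            simp only [hcov, fbmCov]
            have h0 : |s i - s i| ^ (2 * H) = 0 := by
              rw [sub_self, abs_zero]; exact Real.zero_rpow (by positivity)
            have h1 : |t i - t i| ^ (2 * H) = 0 := by
              rw [sub_self, abs_zero]; exact Real.zero_rpow (by positivity)
            have h2 : |t i - s i| = |s i - t i| := abs_sub_comm _ _
            rw [h0, h1, h2]; ring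
          · rw [if_neg hij, huncorr i j hij, huncorr i j hij, huncorr i j hij,
              huncorr i j hij]; ring
  have hint : ∀ i j, Integrable (fun ω => (a i * g i ω) * (a j * g j ω)) μ := by
    intro i j
    have := (memLp_two_integrable_mul (hgL2 i) (hgL2 j)).const_mul (a i * a j)
    convert this using 2 with ω
    ring
  calc ∫ ω, (Y x ω - Y y ω) ^ 2 ∂μ
      = ∫ ω, ∑ i, ∑ j, (a i * g i ω) * (a j * g j ω) ∂μ := by
        congr 1; ext ω
        rw [key, sq, Finset.sum_mul_sum]
    _ = ∑ i, ∑ j, ∫ ω, (a i * g i ω) * (a j * g j ω) ∂μ := by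
        rw [integral_finset_sum _ fun i _ => integrable_finset_sum _ fun j _ => hint i j]
        exact Finset.sum_congr rfl fun i _ => integral_finset_sum _ fun j _ => hint i j
    _ = ∑ i, ∑ j, a i * a j * ∫ ω, g i ω * g j ω ∂μ := by
        refine Finset.sum_congr rfl fun i _ => Finset.sum_congr rfl fun j _ => ?_
        have h : (fun ω => a i * g i ω * (a j * g j ω))
            = fun ω => a i * a j * (g i ω * g j ω) := by ext ω; ring
        rw [h, integral_const_mul]
    _ = ∑ i, a i * a i * |s i - t i| ^ (2 * H) := by
        refine Finset.sum_congr rfl fun i _ => ?_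
        rw [Finset.sum_eq_single i]
        · rw [hgg i i, if_pos rfl]
        · intro j _ hj; rw [hgg i j, if_neg (Ne.symm hj), mul_zero]
        · intro h; exact absurd (Finset.mem_univ i) h
    _ = gammaH H * ∑ i, lam i * c i * |⟪x - y, u (θ i)⟫| ^ (2 * H) := by
        rw [Finset.mul_sum]
        refine Finset.sum_congr rfl fun i _ => ?_
        rw [ha2 i]
        have : ⟪x - y, u (θ i)⟫ = s i - t i := by
          simp [hs, ht, inner_sub_left]
        rw [this]; ring

end
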